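/- For all n ≥ 0 and r ≥ 1, Σ_{k≥0} p(n - P(r+2, -k)) = S_r(n) + G_r(n), where P(s, m) = (m²(s-2) - m(s-4))/2, so that P(r+2, -k) = r·k(k+1)/2 - k. -/

import Mathlib

open scoped Classical

/-- `pI m` is the number of partitions of `m`, with `pI m = 0` for `m < 0`. -/
noncomputable def pI (m : ℤ) : ℕ := if 0 ≤ m then Nat.card (Nat.Partition m.toNat) else 0

/-- The `k`-th triangular number. -/
def T (k : ℕ) : ℕ := k * (k + 1) / 2

/-- The least `r`-gap of a partition: the smallest positive integer appearing
fewer than `r` times as a part; `gap 0 = ⊤` by convention. -/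
noncomputable def gap (r : ℕ) {n : ℕ} (lam : Nat.Partition n) : ℕ∞ :=
  if r = 0 then ⊤ else (sInf {i : ℕ | 0 < i ∧ lam.parts.count i < r} : ℕ)

/-- `S r n` is the sum of the least `r`-gaps over all partitions of `n`. -/
noncomputable def S (r n : ℕ) : ℕ := ∑ lam : Nat.Partition n, (gap r lam).toNat

/-- `G r n` is the number of partitions `lam` of `n` with `gap r lam < gap (r-1) lam`. -/
noncomputable def G (r n : ℕ) : ℕ :=
  Nat.card {lam : Nat.Partition n // gap r lam < gap (r-1) lam}

/-- `U r n` is the number of partitions of `n` into parts not congruent to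
`0`, `r`, or `3r` modulo `4r`. -/
noncomputable def U (r n : ℕ) : ℕ :=
  Nat.card {lam : Nat.Partition n //
    ∀ i ∈ lam.parts, i % (4*r) ≠ 0 ∧ i % (4*r) ≠ r % (4*r) ∧ i % (4*r) ≠ (3*r) % (4*r)}

/-- `qD m` is the number of partitions of `m` into distinct parts. -/
noncomputable def qD (m : ℕ) : ℕ := Nat.card {lam : Nat.Partition m // lam.parts.Nodup}

/-- `pe n` is the number of partitions of `n` into an even number of parts. -/
noncomputable def pe (n : ℕ) : ℕ :=
  Nat.card {lam : Nat.Partition n // Even (Multiset.card lam.parts)}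

/-- `R n` is the number of partitions of `n` with nonnegative rank
(largest part minus number of parts is `≥ 0`). -/
noncomputable def R (n : ℕ) : ℕ :=
  Nat.card {lam : Nat.Partition n // (Multiset.card lam.parts : ℤ) ≤ (lam.parts.sup : ℤ)}

/-- The crank of a partition. -/
noncomputable def crank {n : ℕ} (lam : Nat.Partition n) : ℤ :=
  if lam.parts.count 1 = 0 then (lam.parts.sup : ℤ)
  else (Multiset.card (lam.parts.filter (fun x => lam.parts.count 1 < x)) : ℤ)
        - lam.parts.count 1

/-- `C n` is the number of partitions of `n` with nonnegative crank. -/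
noncomputable def C (n : ℕ) : ℕ := Nat.card {lam : Nat.Partition n // 0 ≤ crank lam}

lemma two_T (k : ℕ) : 2 * T k = k * (k + 1) := by
  rw [T, Nat.mul_div_cancel' (k.even_mul_succ_self).two_dvd]

lemma T_succ (k : ℕ) : T (k + 1) = T k + (k + 1) := by
  have h1 := two_T k; have h2 := two_T (k+1)
  have h3 : 2 * T (k+1) = 2 * T k + 2*(k+1) := by
    rw [h2, show (k+1)*(k+1+1) = k*(k+1) + 2*(k+1) from by ring, h1]
  omega

def Mu (r j : ℕ) : Multiset ℕ := ∑ i ∈ Finset.range j, Multiset.replicate r (i + 1)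

lemma Mu_pos {r j x : ℕ} (hx : x ∈ Mu r j) : 0 < x := by
  rw [Mu, Multiset.mem_sum] at hx
  obtain ⟨i, _, hi⟩ := hx
  rw [Multiset.eq_of_mem_replicate hi]; omega

lemma Mu_sum (r j : ℕ) : (Mu r j).sum = r * T j := by
  induction j with
  | zero => simp [Mu, T]
  | succ j ih =>
    rw [Mu, Finset.sum_range_succ, Multiset.sum_add, ← Mu, ih, Multiset.sum_replicate,
      T_succ, smul_eq_mul]
    ring

lemma Mu_count (r j i : ℕ) : (Mu r j).count i = if 1 ≤ i ∧ i ≤ j then r else 0 := by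
  rw [Mu, Multiset.count_sum']
  simp only [Multiset.count_replicate]
  rcases Nat.eq_zero_or_pos i with h | h
  · subst h; simp
  · have : ∀ x ∈ Finset.range j, ((if x + 1 = i then r else 0) : ℕ)
        = (if x = i - 1 then r else 0) := by
      intro x _; exact if_congr (by omega) rfl rfl
    rw [Finset.sum_congr rfl this, Finset.sum_ite_eq' (Finset.range j) (i-1) (fun _ => r)]
    simp only [Finset.mem_range]
    split <;> split <;> omega

lemma multiset_sum_le {s t : Multiset ℕ} (h : s ≤ t) : s.sum ≤ t.sum := by
  have := tsub_add_cancel_of_le h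
  calc s.sum ≤ (t - s).sum + s.sum := Nat.le_add_left _ _
    _ = t.sum := by rw [← Multiset.sum_add, this]

lemma card_sub (μ : Multiset ℕ) (hpos : ∀ i ∈ μ, 0 < i) (n : ℕ) :
    Nat.card {lam : Nat.Partition n // μ ≤ lam.parts} = pI ((n : ℤ) - μ.sum) := by
  by_cases h : μ.sum ≤ n
  · have h0 : (0:ℤ) ≤ (n : ℤ) - μ.sum := by omega
    rw [pI, if_pos h0]
    have ht : ((n : ℤ) - μ.sum).toNat = n - μ.sum := by omega
    rw [ht]
    apply Nat.card_congr
    refine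
      { toFun := fun lam => ⟨lam.1.parts - μ,
          fun {i} hi => lam.1.parts_pos (Multiset.mem_of_le tsub_le_self hi), ?_⟩
        invFun := fun ν => ⟨⟨ν.parts + μ,
          fun {i} hi => (Multiset.mem_add.mp hi).elim (ν.parts_pos) (hpos i), ?_⟩,
          Multiset.le_add_left _ _⟩
        left_inv := ?_
        right_inv := ?_ }
    · have hle : μ ≤ lam.1.parts := lam.2
      have hs : (lam.1.parts - μ).sum + μ.sum = n := by
        rw [← Multiset.sum_add, tsub_add_cancel_of_le hle, lam.1.parts_sum]
      omega
    · rw [Multiset.sum_add, ν.parts_sum]; omega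
    · intro lam
      apply Subtype.ext
      apply Nat.Partition.ext
      exact tsub_add_cancel_of_le lam.2
    · intro ν
      apply Nat.Partition.ext
      exact add_tsub_cancel_right _ _
  · rw [pI, if_neg (by omega), Nat.card_eq_zero]
    left
    constructor
    intro lam
    exact h (lam.1.parts_sum ▸ multiset_sum_le lam.2)

noncomputable def gl (r : ℕ) {n : ℕ} (lam : Nat.Partition n) : ℕ :=
  sInf {i : ℕ | 0 < i ∧ lam.parts.count i < r}

section glfacts
variable {n r : ℕ}

lemma count_big (lam : Nat.Partition n) (i : ℕ) (hi : n < i) : lam.parts.count i = 0 := by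
  rw [Multiset.count_eq_zero]
  intro hmem
  have := Multiset.single_le_sum (fun x _ => Nat.zero_le x) i hmem
  rw [lam.parts_sum] at this
  omega

lemma mem_gl_set (lam : Nat.Partition n) (hr : 1 ≤ r) :
    (n + 1) ∈ {i : ℕ | 0 < i ∧ lam.parts.count i < r} :=
  ⟨by omega, by rw [count_big lam (n+1) (by omega)]; omega⟩

lemma gl_mem (lam : Nat.Partition n) (hr : 1 ≤ r) :
    0 < gl r lam ∧ lam.parts.count (gl r lam) < r :=
  Nat.sInf_mem ⟨n + 1, mem_gl_set lam hr⟩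

lemma gl_le (lam : Nat.Partition n) (hr : 1 ≤ r) : gl r lam ≤ n + 1 :=
  Nat.sInf_le (mem_gl_set lam hr)

lemma lt_gl_iff (lam : Nat.Partition n) (hr : 1 ≤ r) (j : ℕ) :
    j < gl r lam ↔ ∀ i, 0 < i → i ≤ j → r ≤ lam.parts.count i := by
  constructor
  · intro hj i hi hij
    by_contra hlt
    have hle : gl r lam ≤ i := Nat.sInf_le (⟨hi, by omega⟩ :
      i ∈ {i : ℕ | 0 < i ∧ lam.parts.count i < r})
    omega
  · intro hall
    by_contra hle
    obtain ⟨h1, h2⟩ := gl_mem lam hr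
    exact absurd (hall _ h1 (by omega)) (by omega)

lemma Mu_le_iff (lam : Nat.Partition n) (hr : 1 ≤ r) (j : ℕ) :
    Mu r j ≤ lam.parts ↔ j < gl r lam := by
  rw [lt_gl_iff lam hr, Multiset.le_iff_count]
  constructor
  · intro hc i hi hij
    have := hc i
    rw [Mu_count, if_pos ⟨hi, hij⟩] at this
    exact this
  · intro hall i
    rw [Mu_count]
    split
    · exact hall i (by omega) (by omega)
    · omega

lemma gap_toNat (lam : Nat.Partition n) (hr : 1 ≤ r) : (gap r lam).toNat = gl r lam := by
  rw [gap, if_neg (by omega)]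
  exact ENat.toNat_coe _

end glfacts

lemma gap_lt_iff {n r : ℕ} (lam : Nat.Partition n) (hr : 1 ≤ r) :
    gap r lam < gap (r-1) lam ↔ r - 1 ≤ lam.parts.count (gl r lam) := by
  rcases Nat.eq_or_lt_of_le hr with h1 | h2
  · -- r = 1
    rw [gap, gap, if_neg (by omega), if_pos (by omega)]
    simp only [← h1]
    constructor
    · intro _; omega
    · intro _; exact ENat.coe_lt_top _
  · -- r ≥ 2
    have hr1 : 1 ≤ r - 1 := by omega
    rw [gap, gap, if_neg (by omega), if_neg (by omega)]
    rw [show sInf {i : ℕ | 0 < i ∧ lam.parts.count i < r} = gl r lam from rfl,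
        show sInf {i : ℕ | 0 < i ∧ lam.parts.count i < r - 1} = gl (r-1) lam from rfl]
    rw [Nat.cast_lt]
    constructor
    · intro hlt
      by_contra hc
      have : gl (r-1) lam ≤ gl r lam := Nat.sInf_le ⟨(gl_mem lam hr).1, by omega⟩
      omega
    · intro hcnt
      rw [lt_gl_iff lam hr1]
      intro i hi hile
      rcases Nat.eq_or_lt_of_le hile with he | hlt
      · subst he; exact hcnt
      · have := (lt_gl_iff lam hr (gl r lam - 1)).mp (by omega) i hi (by omega)
        omega

lemma nat_card_filter {α : Type*} [Fintype α] (p : α → Prop) [DecidablePred p] :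
    Nat.card {x // p x} = (Finset.univ.filter p).card := by
  rw [Nat.card_eq_fintype_card]
  convert Fintype.card_subtype p

lemma cardN (n r j : ℕ) (hr : 1 ≤ r) :
    (Finset.univ.filter (fun lam : Nat.Partition n => j < gl r lam)).card
      = pI ((n : ℤ) - r * T j) := by
  have : (Finset.univ.filter (fun lam : Nat.Partition n => j < gl r lam))
      = (Finset.univ.filter (fun lam : Nat.Partition n => Mu r j ≤ lam.parts)) := by
    apply Finset.filter_congr
    intro lam _
    simp [Mu_le_iff lam hr j]
  rw [this, ← nat_card_filter, card_sub _ (fun i hi => Mu_pos hi), Mu_sum]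
  push_cast
  ring_nf

lemma cardE (n r j : ℕ) (hr : 1 ≤ r) :
    (Finset.univ.filter (fun lam : Nat.Partition n =>
        gl r lam = j + 1 ∧ r - 1 ≤ lam.parts.count (j+1))).card
      + (Finset.univ.filter (fun lam : Nat.Partition n => j + 1 < gl r lam)).card
      = pI ((n : ℤ) - (r * T j + (r-1) * (j+1))) := by
  set ν : Multiset ℕ := Mu r j + Multiset.replicate (r-1) (j+1) with hν
  have hsum : ν.sum = r * T j + (r-1)*(j+1) := by
    rw [hν, Multiset.sum_add, Mu_sum, Multiset.sum_replicate, smul_eq_mul]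
  have hpos : ∀ i ∈ ν, 0 < i := by
    intro i hi
    rcases Multiset.mem_add.mp hi with h | h
    · exact Mu_pos h
    · rw [Multiset.eq_of_mem_replicate h]; omega
  have hle : ∀ lam : Nat.Partition n,
      ν ≤ lam.parts ↔ (j < gl r lam ∧ r - 1 ≤ lam.parts.count (j+1)) := by
    intro lam
    rw [← Mu_le_iff lam hr j, Multiset.le_iff_count, Multiset.le_iff_count]
    constructor
    · intro hc
      constructor
      · intro i
        have := hc i
        rw [hν, Multiset.count_add, Multiset.count_replicate] at this
        omega
      · have := hc (j+1)
        rw [hν, Multiset.count_add, Multiset.count_replicate, if_pos rfl,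
          Mu_count, if_neg (by omega)] at this
        omega
    · rintro ⟨h1, h2⟩ i
      have hh := h1 i
      rw [hν, Multiset.count_add, Multiset.count_replicate]
      rcases eq_or_ne (j+1) i with he | hne
      · rw [if_pos he, Mu_count, if_neg (by omega), ← he]
        omega
      · rw [if_neg hne, add_zero]
        exact hh
  have hsplit : ∀ lam : Nat.Partition n,
      ν ≤ lam.parts ↔
        ((gl r lam = j + 1 ∧ r - 1 ≤ lam.parts.count (j+1)) ∨ (j + 1 < gl r lam)) := by
    intro lam
    rw [hle lam]
    constructor
    · rintro ⟨h1, h2⟩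
      by_cases hc : r ≤ lam.parts.count (j+1)
      · right
        rw [lt_gl_iff lam hr]
        intro i hi hij
        rcases Nat.eq_or_lt_of_le hij with he | hlt
        · subst he; exact hc
        · exact (lt_gl_iff lam hr j).mp h1 i hi (by omega)
      · left
        have : gl r lam ≤ j + 1 := Nat.sInf_le (⟨by omega, by omega⟩ :
          (j+1) ∈ {i : ℕ | 0 < i ∧ lam.parts.count i < r})
        exact ⟨by omega, h2⟩
    · rintro (⟨h1, h2⟩ | h)
      · exact ⟨by omega, h2⟩
      · exact ⟨by omega, by have := (lt_gl_iff lam hr (j+1)).mp h (j+1) (by omega) le_rfl; omega⟩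
  have heq : (Finset.univ.filter (fun lam : Nat.Partition n => ν ≤ lam.parts))
      = (Finset.univ.filter (fun lam : Nat.Partition n =>
          gl r lam = j + 1 ∧ r - 1 ≤ lam.parts.count (j+1)))
        ∪ (Finset.univ.filter (fun lam : Nat.Partition n => j + 1 < gl r lam)) := by
    rw [← Finset.filter_or]
    apply Finset.filter_congr
    intro lam _
    simp only [hsplit lam]
  have hdisj : Disjoint
      (Finset.univ.filter (fun lam : Nat.Partition n =>
          gl r lam = j + 1 ∧ r - 1 ≤ lam.parts.count (j+1)))
      (Finset.univ.filter (fun lam : Nat.Partition n => j + 1 < gl r lam)) := by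
    rw [Finset.disjoint_left]
    intro lam h1 h2
    rw [Finset.mem_filter] at h1 h2
    omega
  have hcu := Finset.card_union_of_disjoint hdisj
  rw [← heq] at hcu
  rw [← hcu, ← nat_card_filter, card_sub _ hpos, hsum]
  congr 1
  have hcast : ((r:ℤ) - 1) = ((r - 1 : ℕ) : ℤ) := by omega
  rw [hcast]
  push_cast
  ring

lemma S_eq (n r : ℕ) (hr : 1 ≤ r) :
    S r n = ∑ j ∈ Finset.range (n+2), pI ((n:ℤ) - r * T j) := by
  have h1 : S r n = ∑ lam : Nat.Partition n, gl r lam :=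
    Finset.sum_congr rfl fun lam _ => gap_toNat lam hr
  have h2 : ∀ lam : Nat.Partition n, gl r lam
      = ∑ j ∈ Finset.range (n+2), (if j < gl r lam then 1 else 0) := by
    intro lam
    rw [← Finset.card_filter]
    have : Finset.filter (fun j => j < gl r lam) (Finset.range (n+2))
        = Finset.range (gl r lam) := by
      ext x
      simp only [Finset.mem_filter, Finset.mem_range]
      have := gl_le lam hr
      omega
    rw [this, Finset.card_range]
  rw [h1, Finset.sum_congr rfl (fun lam _ => h2 lam), Finset.sum_comm]
  refine Finset.sum_congr rfl fun j _ => ?_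
  rw [← Finset.card_filter, cardN n r j hr]

lemma G_eq (n r : ℕ) (hr : 1 ≤ r) :
    G r n = ∑ j ∈ Finset.range (n+1),
      (Finset.univ.filter (fun lam : Nat.Partition n =>
        gl r lam = j + 1 ∧ r - 1 ≤ lam.parts.count (j+1))).card := by
  rw [G, nat_card_filter]
  have h1 : Finset.filter (fun lam : Nat.Partition n => gap r lam < gap (r-1) lam) Finset.univ
      = Finset.filter (fun lam : Nat.Partition n =>
          r - 1 ≤ lam.parts.count (gl r lam)) Finset.univ := by
    apply Finset.filter_congr
    intro lam _
    simp [gap_lt_iff lam hr]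
  rw [h1]
  rw [Finset.card_eq_sum_card_fiberwise (f := fun lam => gl r lam - 1)
    (t := Finset.range (n+1)) (fun lam _ => by
      simp only [Finset.mem_coe, Finset.mem_range]
      have := gl_le lam hr
      have := (gl_mem lam hr).1
      omega)]
  refine Finset.sum_congr rfl fun j _ => ?_
  rw [Finset.filter_filter]
  congr 1
  apply Finset.filter_congr
  intro lam _
  have h0 := (gl_mem lam hr).1
  constructor
  · rintro ⟨hc, hj⟩
    have : gl r lam = j + 1 := by omega
    exact ⟨this, this ▸ hc⟩
  · rintro ⟨hj, hc⟩
    exact ⟨hj ▸ hc, by omega⟩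

lemma pI_neg {m : ℤ} (h : m < 0) : pI m = 0 := by rw [pI, if_neg (by omega)]

theorem stmt9 (n r : ℕ) (hr : 1 ≤ r) :
    ∑' k : ℕ, pI ((n : ℤ) - ((r : ℤ) * ((k : ℤ) * (k + 1) / 2) - k))
      = S r n + G r n := by
  have castT : ∀ k : ℕ, (k : ℤ) * ((k:ℤ) + 1) / 2 = (T k : ℤ) := by
    intro k
    have h : (k:ℤ) * ((k:ℤ)+1) = 2 * (T k : ℤ) := by exact_mod_cast (two_T k).symm
    rw [h, Int.mul_ediv_cancel_left _ (by norm_num)]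
  have hbig : ∀ k : ℕ, n + 2 ≤ k → (n:ℤ) - ((r:ℤ) * (T k : ℤ) - k) < 0 := by
    intro k hk
    have h2T := two_T k
    have h1 : (n+2) * (k+1) ≤ k * (k+1) := Nat.mul_le_mul_right _ hk
    have h2 : n * 1 ≤ n * k := Nat.mul_le_mul_left _ (by omega)
    have h3 : (n+2)*(k+1) = n*k + n + 2*k + 2 := by ring
    have h4 : T k ≤ r * T k := Nat.le_mul_of_pos_left _ hr
    have h5 : n + k < r * T k := by omega
    have : ((n:ℤ) + k) < (r:ℤ) * (T k : ℤ) := by exact_mod_cast h5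
    omega
  have hvan : ∀ k : ℕ, k ∉ Finset.range (n+2) →
      pI ((n : ℤ) - ((r : ℤ) * ((k : ℤ) * ((k:ℤ) + 1) / 2) - k)) = 0 := by
    intro k hk
    rw [castT k]
    exact pI_neg (hbig k (by simpa using hk))
  rw [tsum_eq_sum (s := Finset.range (n+2)) hvan]
  have hterm : ∀ k : ℕ, pI ((n : ℤ) - ((r:ℤ) * ((k:ℤ)*((k:ℤ)+1)/2) - k))
      = pI ((n:ℤ) - ((r:ℤ)*(T k:ℤ) - k)) := fun k => by rw [castT k]
  rw [Finset.sum_congr rfl (fun k _ => hterm k)]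
  rw [show (n + 2) = (n + 1) + 1 from rfl, Finset.sum_range_succ']
  have hterm2 : ∀ j : ℕ,
      pI ((n:ℤ) - ((r:ℤ)*(T (j+1):ℤ) - ((j:ℕ)+1:ℕ)))
      = (Finset.univ.filter (fun lam : Nat.Partition n =>
          gl r lam = j + 1 ∧ r - 1 ≤ lam.parts.count (j+1))).card
        + pI ((n:ℤ) - (r:ℤ) * (T (j+1) : ℤ)) := by
    intro j
    have harg : (n:ℤ) - ((r:ℤ)*(T (j+1):ℤ) - ((j:ℕ)+1:ℕ))
        = (n:ℤ) - ((r:ℤ) * (T j : ℤ) + ((r:ℤ)-1) * ((j:ℤ)+1)) := by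
      rw [T_succ]
      push_cast
      ring
    rw [harg, ← cardE n r j hr, cardN n r (j+1) hr]
  rw [Finset.sum_congr rfl (fun j _ => hterm2 j), Finset.sum_add_distrib]
  rw [S_eq n r hr, G_eq n r hr]
  rw [show (n + 2) = (n + 1) + 1 from rfl,
    Finset.sum_range_succ' (fun j => pI ((n:ℤ) - (r:ℤ)*(T j:ℤ))) (n+1)]
  have h0 : pI ((n:ℤ) - ((r:ℤ)*(T 0:ℤ) - (0:ℕ))) = pI ((n:ℤ) - (r:ℤ)*(T 0:ℤ)) := by
    norm_num
  rw [h0]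
  ring
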